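/- Let α ∈ (0,1), λmax > 0, and set p̃ = λmax·(1−α)^{1/α}. Let B be a finite index set; for each i ∈ B let λ_i be α-strongly regular on [0,∞) with λ_i(0) = λmax, and let x_i ≥ 0 and x*_i ≥ 0 be such that either x_i ≥ x*_i or λ_i(x_i) ≤ p̃. Then ∑_{i∈B} ∫_{x_i}^{x*_i} λ_i(x) dx ≤ (1/(1−α)) · ∑_{i∈B} λ_i(x_i)·x_i. -/

import Mathlib

open Set MeasureTheory intervalIntegral

private lemma sr_pos (f : ℝ → ℝ)
    (hnn : ∀ u, 0 ≤ u → 0 ≤ f u)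
    (hdiff : ∀ u, 0 ≤ u → DifferentiableAt ℝ f u)
    (hd : ∀ u, 0 ≤ u → deriv f u < 0) :
    ∀ u, 0 ≤ u → 0 < f u := by
  intro u hu
  rcases (hnn u hu).lt_or_eq with h | h
  · exact h
  exfalso
  have hlt : u < u + 1 := by linarith
  obtain ⟨c, hc, hceq⟩ := exists_hasDerivAt_eq_slope f (deriv f) hlt
    (fun t ht => ((hdiff t (le_trans hu ht.1)).continuousAt).continuousWithinAt)
    (fun t ht => (hdiff t (le_trans hu ht.1.le)).hasDerivAt)
  have h1 : deriv f c < 0 := hd c (le_trans hu hc.1.le)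
  have h2 : 0 ≤ f (u + 1) := hnn _ (by linarith)
  rw [hceq] at h1
  have he : (u:ℝ) + 1 - u = 1 := by ring
  rw [he, ← h, div_one] at h1
  linarith

set_option maxHeartbeats 1000000 in
private lemma single_bound
    (α lamMax : ℝ) (hα0 : 0 < α) (hα1 : α < 1) (hlamMax : 0 < lamMax)
    (f : ℝ → ℝ) (x y : ℝ)
    (hnn : ∀ u, 0 ≤ u → 0 ≤ f u)
    (hdiff : ∀ u, 0 ≤ u → DifferentiableAt ℝ f u)
    (hd : ∀ u, 0 ≤ u → deriv f u < 0)
    (hsr : ∀ u v, 0 ≤ u → u < v → f v / |deriv f v| - f u / |deriv f u| ≤ α * (v - u))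
    (hpeak : f 0 = lamMax)
    (hx : 0 ≤ x) (hy : 0 ≤ y)
    (hbench : y ≤ x ∨ f x ≤ lamMax * (1 - α) ^ (1 / α : ℝ)) :
    ∫ u in x..y, f u ≤ (1 / (1 - α)) * (f x * x) := by
  have h1α : (0:ℝ) < 1 - α := by linarith
  have fpos := sr_pos f hnn hdiff hd
  have hrhs : 0 ≤ (1 / (1 - α)) * (f x * x) :=
    mul_nonneg (by positivity) (mul_nonneg (hnn x hx) hx)
  rcases le_or_gt y x with hyx | hxy
  · -- trivial case
    have h0 : 0 ≤ ∫ u in y..x, f u :=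
      intervalIntegral.integral_nonneg hyx (fun u hu => hnn u (le_trans hy hu.1))
    rw [intervalIntegral.integral_symm]
    linarith
  -- main case
  have hfx : f x ≤ lamMax * (1 - α) ^ (1 / α : ℝ) := hbench.resolve_left (not_le.mpr hxy)
  set p : ℝ := 1 / α with hp
  have hp0 : 0 < p := by positivity
  have hpα : p * α = 1 := by rw [hp]; field_simp
  have hgx : deriv f x < 0 := hd x hx
  set r : ℝ := f x / (-(deriv f x)) with hr
  have hrpos : 0 < r := div_pos (fpos x hx) (by linarith)
  set c : ℝ := r - α * x with hc
  have habs : ∀ u, 0 ≤ u → |deriv f u| = -(deriv f u) := fun u hu => abs_of_neg (hd u hu)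
  -- SR reformulations
  have hub : ∀ u, x < u → f u / (-(deriv f u)) ≤ c + α * u := by
    intro u hu
    have h := hsr x u hx hu
    rw [habs u (le_trans hx hu.le), habs x hx] at h
    rw [hc]; rw [hr]; linarith
  have hlb : ∀ u, 0 ≤ u → u < x → c + α * u ≤ f u / (-(deriv f u)) := by
    intro u hu0 hu
    have h := hsr u x hu0 hu
    rw [habs u hu0, habs x hx] at h
    rw [hc]; rw [hr]; linarith
  -- the auxiliary function
  set ψ : ℝ → ℝ := fun u => f u * (c + α * u) ^ p with hψ
  have hψderiv : ∀ u, 0 ≤ u → 0 < c + α * u →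
      HasDerivAt ψ ((c + α * u) ^ (p - 1) * (deriv f u * (c + α * u) + f u)) u := by
    intro u hu hb
    have h1 : HasDerivAt (fun u : ℝ => c + α * u) α u := by
      simpa using ((hasDerivAt_id u).const_mul α).const_add c
    have h2 : HasDerivAt (fun u : ℝ => (c + α * u) ^ p) (p * (c + α * u) ^ (p - 1) * α) u :=
      (Real.hasDerivAt_rpow_const (p := p) (Or.inl hb.ne')).comp (h := fun u : ℝ => c + α * u) u h1
    have h3 := ((hdiff u hu).hasDerivAt).mul h2
    refine h3.congr_deriv ?_
    have hsplit : (c + α * u) ^ p = (c + α * u) ^ (p - 1) * (c + α * u) := by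
      rw [← Real.rpow_add_one hb.ne']; ring_nf
    rw [hsplit]
    have : p * (c + α * u) ^ (p - 1) * α = (c + α * u) ^ (p - 1) := by
      rw [mul_comm p, mul_assoc, hpα, mul_one]
    rw [this]; ring
  have hψcont : ∀ u, 0 ≤ u → 0 < c + α * u → ContinuousAt ψ u := by
    intro u hu hb
    exact ((hdiff u hu).continuousAt).mul
      ((by fun_prop : ContinuousAt (fun u : ℝ => c + α * u) u).rpow_const (Or.inl hb.ne'))
  -- Step A : r ≤ x
  have hrx : r ≤ x := by
    rcases le_or_gt c 0 with hc0 | hc0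
    · nlinarith
    · have hbpos : ∀ u ∈ Icc (0:ℝ) x, 0 < c + α * u := by
        intro u hu; nlinarith [hu.1]
      have hmono : MonotoneOn ψ (Icc 0 x) := by
        apply monotoneOn_of_deriv_nonneg (convex_Icc 0 x)
        · exact fun u hu => (hψcont u hu.1 (hbpos u hu)).continuousWithinAt
        · rw [interior_Icc]
          exact fun u hu => ((hψderiv u hu.1.le (hbpos u ⟨hu.1.le, hu.2.le⟩)).differentiableAt).differentiableWithinAt
        · rw [interior_Icc]
          intro u hu
          have hb := hbpos u ⟨hu.1.le, hu.2.le⟩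
          rw [(hψderiv u hu.1.le hb).deriv]
          have hkey := hlb u hu.1.le hu.2
          have hdu : 0 < -(deriv f u) := by linarith [hd u hu.1.le]
          have : (c + α * u) * (-(deriv f u)) ≤ f u := (le_div_iff₀ hdu).mp hkey
          have hin : 0 ≤ deriv f u * (c + α * u) + f u := by nlinarith
          exact mul_nonneg (Real.rpow_nonneg hb.le _) hin
      have hψ0x : ψ 0 ≤ ψ x := hmono ⟨le_refl 0, hx⟩ ⟨hx, le_refl x⟩ hx
      have hψ0 : ψ 0 = lamMax * c ^ p := by simp [hψ, hpeak]
      have hcx : c + α * x = r := by rw [hc]; ring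
      have hψx : ψ x = f x * r ^ p := by simp only [hψ, hcx]
      have hchain : lamMax * c ^ p ≤ lamMax * ((1 - α) * r) ^ p := by
        rw [← hψ0]
        calc ψ 0 ≤ ψ x := hψ0x
          _ = f x * r ^ p := hψx
          _ ≤ (lamMax * (1 - α) ^ p) * r ^ p := by
              have := Real.rpow_nonneg hrpos.le p
              nlinarith
          _ = lamMax * ((1 - α) * r) ^ p := by
              rw [Real.mul_rpow (by linarith) hrpos.le]; ring
      have hcp : c ^ p ≤ ((1 - α) * r) ^ p := le_of_mul_le_mul_left
        (by linarith [hchain]) hlamMax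
      have hfin : c ≤ (1 - α) * r := by
        have := Real.rpow_le_rpow (Real.rpow_nonneg hc0.le p) hcp hα0.le
        rwa [← Real.rpow_mul hc0.le, hpα, Real.rpow_one,
          ← Real.rpow_mul (by nlinarith : (0:ℝ) ≤ (1-α)*r), hpα, Real.rpow_one] at this
      rw [hc] at hfin; nlinarith
  -- Step B
  have hcx : c + α * x = r := by rw [hc]; ring
  have hbpos2 : ∀ u, x ≤ u → 0 < c + α * u := by
    intro u hu; nlinarith
  have hanti : AntitoneOn ψ (Icc x y) := by
    apply antitoneOn_of_deriv_nonpos (convex_Icc x y)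
    · exact fun u hu => (hψcont u (le_trans hx hu.1) (hbpos2 u hu.1)).continuousWithinAt
    · rw [interior_Icc]
      exact fun u hu => ((hψderiv u (le_trans hx hu.1.le) (hbpos2 u hu.1.le)).differentiableAt).differentiableWithinAt
    · rw [interior_Icc]
      intro u hu
      have hb := hbpos2 u hu.1.le
      rw [(hψderiv u (le_trans hx hu.1.le) hb).deriv]
      have hkey := hub u hu.1
      have hdu : 0 < -(deriv f u) := by linarith [hd u (le_trans hx hu.1.le)]
      have : f u ≤ (c + α * u) * (-(deriv f u)) := (div_le_iff₀ hdu).mp hkey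
      have hin : deriv f u * (c + α * u) + f u ≤ 0 := by nlinarith
      exact mul_nonpos_of_nonneg_of_nonpos (Real.rpow_nonneg hb.le _) hin
  have hpoint : ∀ u ∈ Icc x y, f u * (c + α * u) ^ p ≤ f x * r ^ p := by
    intro u hu
    have := hanti ⟨le_refl x, hxy.le⟩ hu hu.1
    simpa [hψ, hcx] using this
  set K : ℝ := f x * r ^ p / (1 - α) with hK
  have hKpos : 0 < K := div_pos (mul_pos (fpos x hx) (Real.rpow_pos_of_pos hrpos p)) h1α
  have hfcont : ContinuousOn f (Icc x y) :=
    fun u hu => ((hdiff u (le_trans hx hu.1)).continuousAt).continuousWithinAt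
  set H : ℝ → ℝ := fun t => (∫ u in x..t, f u) + K * (c + α * t) ^ (1 - p) with hH
  have hHanti : AntitoneOn H (Icc x y) := by
    have hHderiv : ∀ t ∈ Ioo x y, HasDerivAt H
        (f t + K * ((1 - p) * (c + α * t) ^ (1 - p - 1) * α)) t := by
      intro t ht
      have hint : IntervalIntegrable f volume x t :=
        (hfcont.mono (Icc_subset_Icc le_rfl ht.2.le)).intervalIntegrable_of_Icc ht.1.le
      have hmeas : StronglyMeasurableAtFilter f (nhds t) volume := by
        refine ⟨Ioi 0, Ioi_mem_nhds (lt_of_le_of_lt hx ht.1), ?_⟩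
        have hcont0 : ContinuousOn f (Ioi 0) := fun u hu =>
          ((hdiff u (le_of_lt hu)).continuousAt).continuousWithinAt
        exact hcont0.aestronglyMeasurable measurableSet_Ioi
      have h1 : HasDerivAt (fun t : ℝ => ∫ u in x..t, f u) (f t) t :=
        intervalIntegral.integral_hasDerivAt_right hint hmeas
          ((hdiff t (le_trans hx ht.1.le)).continuousAt)
      have hb := hbpos2 t ht.1.le
      have hlin : HasDerivAt (fun t : ℝ => c + α * t) α t := by
        simpa using ((hasDerivAt_id t).const_mul α).const_add c
      have h2 : HasDerivAt (fun t : ℝ => K * (c + α * t) ^ (1 - p))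
          (K * ((1 - p) * (c + α * t) ^ (1 - p - 1) * α)) t :=
        (((Real.hasDerivAt_rpow_const (p := 1 - p) (Or.inl hb.ne')).comp (h := fun t : ℝ => c + α * t) t hlin)).const_mul K
      exact h1.add h2
    apply antitoneOn_of_deriv_nonpos (convex_Icc x y)
    · apply ContinuousOn.add
      · have hIO : IntegrableOn f (uIcc x y) volume := by
          rw [uIcc_of_le hxy.le]; exact hfcont.integrableOn_Icc
        have := intervalIntegral.continuousOn_primitive_interval hIO
        rwa [uIcc_of_le hxy.le] at this
      · intro u hu
        exact (ContinuousAt.continuousWithinAt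
          (((by fun_prop : ContinuousAt (fun u : ℝ => c + α * u) u).rpow_const
            (Or.inl (hbpos2 u hu.1).ne')).const_mul K))
    · rw [interior_Icc]
      exact fun t ht => ((hHderiv t ht).differentiableAt).differentiableWithinAt
    · rw [interior_Icc]
      intro t ht
      rw [(hHderiv t ht).deriv]
      have hb := hbpos2 t ht.1.le
      have hBpos : 0 < (c + α * t) ^ p := Real.rpow_pos_of_pos hb p
      have hKe : K * ((1 - p) * α) = -(f x * r ^ p) := by
        have h1p : (1 - p) * α = α - 1 := by rw [sub_mul, one_mul, hpα]
        rw [h1p, hK]; field_simp; ring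
      have hneg : (c + α * t) ^ (1 - p - 1) = ((c + α * t) ^ p)⁻¹ := by
        rw [show (1 : ℝ) - p - 1 = -p by ring, Real.rpow_neg hb.le]
      have hpt := hpoint t ⟨ht.1.le, ht.2.le⟩
      have hle : f t ≤ f x * r ^ p * ((c + α * t) ^ p)⁻¹ := by
        rw [← div_eq_mul_inv]
        exact (le_div_iff₀ hBpos).mpr hpt
      have : K * ((1 - p) * (c + α * t) ^ (1 - p - 1) * α)
          = -(f x * r ^ p) * ((c + α * t) ^ p)⁻¹ := by
        rw [hneg, ← hKe]; ring
      rw [this]; linarith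
  have hHyx : H y ≤ H x := hHanti ⟨le_refl x, hxy.le⟩ ⟨hxy.le, le_refl y⟩ hxy.le
  have hHx : H x = K * r ^ (1 - p) := by
    simp [hH, hcx, intervalIntegral.integral_same]
  have htail : 0 ≤ K * (c + α * y) ^ (1 - p) :=
    mul_nonneg hKpos.le (Real.rpow_nonneg (hbpos2 y hxy.le).le _)
  have hKr : K * r ^ (1 - p) = (1 / (1 - α)) * (f x * r) := by
    rw [hK]
    rw [div_mul_eq_mul_div, mul_assoc, ← Real.rpow_add hrpos, show p + (1 - p) = 1 by ring,
      Real.rpow_one]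
    ring
  have hfinal : ∫ u in x..y, f u ≤ (1 / (1 - α)) * (f x * r) := by
    have h1 := hHyx
    rw [hHx, hKr] at h1
    have h2 : H y = (∫ u in x..y, f u) + K * (c + α * y) ^ (1 - p) := by simp [hH]
    rw [h2] at h1
    linarith
  calc ∫ u in x..y, f u ≤ (1 / (1 - α)) * (f x * r) := hfinal
    _ ≤ (1 / (1 - α)) * (f x * x) := by
        have h1 : 0 ≤ f x := hnn x hx
        have h2 : 0 ≤ (1:ℝ) / (1 - α) := by positivity
        nlinarith [mul_nonneg h1 (sub_nonneg.mpr hrx)]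

/-- Claim `clm_aboveandbelowthresh`, part 2. If each `λ_i` is
α-strongly regular with uniform peak `λ_i(0) = λmax`, and each demand `x_i` either
dominates the optimum demand `x*_i` or satisfies `λ_i(x_i) ≤ p̃ = λmax·(1−α)^{1/α}`,
then `∑_i ∫_{x_i}^{x*_i} λ_i ≤ (1/(1−α))·∑_i λ_i(x_i)·x_i`. -/
theorem welfare_gap_le_income
    {ι : Type*} (B : Finset ι)
    (α lamMax : ℝ) (hα0 : 0 < α) (hα1 : α < 1) (hlamMax : 0 < lamMax)
    (lam : ι → ℝ → ℝ) (x xstar : ι → ℝ)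
    (hlam_nonneg : ∀ i ∈ B, ∀ u, 0 ≤ u → 0 ≤ lam i u)
    (hlam_anti : ∀ i ∈ B, ∀ u v, 0 ≤ u → u ≤ v → lam i v ≤ lam i u)
    (hlam_diff : ∀ i ∈ B, ∀ u, 0 ≤ u → DifferentiableAt ℝ (lam i) u)
    (hlam_deriv_neg : ∀ i ∈ B, ∀ u, 0 ≤ u → deriv (lam i) u < 0)
    (hlam_sr : ∀ i ∈ B, ∀ u v, 0 ≤ u → u < v →
      lam i v / |deriv (lam i) v| - lam i u / |deriv (lam i) u| ≤ α * (v - u))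
    (hpeak : ∀ i ∈ B, lam i 0 = lamMax)
    (hx : ∀ i ∈ B, 0 ≤ x i) (hxstar : ∀ i ∈ B, 0 ≤ xstar i)
    (hbench : ∀ i ∈ B, xstar i ≤ x i ∨
      lam i (x i) ≤ lamMax * (1 - α) ^ (1 / α : ℝ)) :
    ∑ i ∈ B, ∫ u in (x i)..(xstar i), lam i u ≤
      (1 / (1 - α)) * ∑ i ∈ B, lam i (x i) * x i := by
  rw [Finset.mul_sum]
  apply Finset.sum_le_sum
  intro i hi
  exact single_bound α lamMax hα0 hα1 hlamMax (lam i) (x i) (xstar i)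
    (hlam_nonneg i hi) (hlam_diff i hi) (hlam_deriv_neg i hi) (hlam_sr i hi)
    (hpeak i hi) (hx i hi) (hxstar i hi) (hbench i hi)
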